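/- Let X be a nominal set (a Perm(𝔸)-set with finitely supported elements over a countably infinite set 𝔸 of atoms) and x ∈ X. If π is a finite permutation of 𝔸 written as a product of disjoint cycles with π·x = x, and η is one of the cycles of π such that the domain of η contains some atom not in supp(x), then the domain of η is disjoint from supp(x). -/

import Mathlib

/-- The countably infinite set of atoms. -/
abbrev Atom : Type := ℕ

/-- The domain of a permutation: the atoms it moves. -/
def pdom (π : Equiv.Perm Atom) : Set Atom := {a | π a ≠ a}

/-- The group `Perm(𝔸)` of finite (finitely supported) permutations of atoms. -/
def FinPerm : Subgroup (Equiv.Perm Atom) where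
  carrier := {π | (pdom π).Finite}
  one_mem' := by simp [pdom]
  mul_mem' := by
    intro π σ hπ hσ
    refine (Set.Finite.union hπ hσ).subset ?_
    intro a ha
    by_contra h
    simp only [Set.mem_union, pdom, Set.mem_setOf_eq, not_or, not_not] at h
    exact ha (by simp [pdom, Equiv.Perm.mul_apply, h.1, h.2])
  inv_mem' := by
    intro π hπ
    refine hπ.subset ?_
    intro a ha h
    apply ha
    calc π⁻¹ a = π⁻¹ (π a) := by rw [h]
    _ = a := by simp

/-- `B` supports `x` w.r.t. the action `act`: every finite permutation fixing `B`
pointwise fixes `x`. -/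
def NSupports {X : Type*} (act : FinPerm → X → X) (B : Set Atom) (x : X) : Prop :=
  ∀ π : FinPerm, (∀ a ∈ B, (π : Equiv.Perm Atom) a = a) → act π x = x

/-- `nsupp act x` is the least support of `x`: the intersection of all finite supports. -/
def nsupp {X : Type*} (act : FinPerm → X → X) (x : X) : Set Atom :=
  ⋂₀ {B : Set Atom | B.Finite ∧ NSupports act B x}

/-- `act` makes `X` into a nominal set: a lawful `FinPerm`-action all of whose
elements are finitely supported. -/
def IsNominal {X : Type*} (act : FinPerm → X → X) : Prop :=
  (∀ x, act 1 x = x) ∧ (∀ π σ x, act (π * σ) x = act π (act σ x)) ∧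
  (∀ x, ∃ B : Set Atom, B.Finite ∧ NSupports act B x)

/-- The transposition `(a b)` as a finite permutation. -/
def swapF (a b : Atom) : FinPerm :=
  ⟨Equiv.swap a b, by
    apply Set.Finite.subset ((Set.finite_singleton b).insert a)
    intro x hx
    by_contra h
    simp only [Set.mem_insert_iff, Set.mem_singleton_iff, not_or] at h
    exact hx (Equiv.swap_apply_of_ne_of_ne h.1 h.2)⟩


section Aux

variable {X : Type*} (act : FinPerm → X → X)

lemma nsupports_image (hnom : IsNominal act) (σ : FinPerm) (x : X) (B : Set Atom)
    (hsup : NSupports act B x) :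
    NSupports act ((σ : Equiv.Perm Atom) '' B) (act σ x) := by
  obtain ⟨h1, h2, _⟩ := hnom
  intro τ hτ
  have hfixB : act (σ⁻¹ * τ * σ) x = x := by
    apply hsup
    intro a ha
    have hτa : (τ : Equiv.Perm Atom) ((σ : Equiv.Perm Atom) a) = (σ : Equiv.Perm Atom) a :=
      hτ _ ⟨a, ha, rfl⟩
    simp [Equiv.Perm.mul_apply, hτa]
  calc act τ (act σ x) = act (τ * σ) x := (h2 _ _ _).symm
    _ = act (σ * (σ⁻¹ * τ * σ)) x := by congr 1; group
    _ = act σ (act (σ⁻¹ * τ * σ) x) := h2 _ _ _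
    _ = act σ x := by rw [hfixB]

lemma image_nsupp_subset (hnom : IsNominal act) (σ : FinPerm) (x : X) :
    (σ : Equiv.Perm Atom) '' nsupp act x ⊆ nsupp act (act σ x) := by
  rintro _ ⟨a, ha, rfl⟩
  simp only [nsupp, Set.mem_sInter, Set.mem_setOf_eq]
  rintro C ⟨hCfin, hCsup⟩
  have hfixinv : act σ⁻¹ (act σ x) = x := by
    obtain ⟨h1, h2, _⟩ := hnom
    rw [← h2]
    simp [h1]
  have hB : (((σ⁻¹ : FinPerm) : Equiv.Perm Atom) '' C).Finite ∧
      NSupports act (((σ⁻¹ : FinPerm) : Equiv.Perm Atom) '' C) x := by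
    refine ⟨hCfin.image _, ?_⟩
    have := nsupports_image act hnom σ⁻¹ (act σ x) C hCsup
    rwa [hfixinv] at this
  have haB : a ∈ ((σ⁻¹ : FinPerm) : Equiv.Perm Atom) '' C := by
    have := Set.mem_sInter.mp ha _ hB
    exact this
  obtain ⟨c, hc, hac⟩ := haB
  have : (σ : Equiv.Perm Atom) a = c := by
    rw [← hac]; simp
  rwa [this]

lemma mem_nsupp_iff_of_fix (hnom : IsNominal act) (π : FinPerm) (x : X)
    (hfix : act π x = x) (a : Atom) :
    (π : Equiv.Perm Atom) a ∈ nsupp act x ↔ a ∈ nsupp act x := by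
  constructor
  · intro h
    have hfixinv : act π⁻¹ x = x := by
      obtain ⟨h1, h2, _⟩ := hnom
      conv_lhs => rw [← hfix]
      rw [← h2]
      simp [h1]
    have := image_nsupp_subset act hnom π⁻¹ x ⟨_, h, rfl⟩
    rw [hfixinv] at this
    simpa using this
  · intro h
    have := image_nsupp_subset act hnom π x ⟨a, h, rfl⟩
    rwa [hfix] at this

lemma prod_fix_of_fix (b : Atom) :
    ∀ l : List (Equiv.Perm Atom), (∀ σ ∈ l, σ b = b) → l.prod b = b := by
  intro l
  induction l with
  | nil => simp
  | cons σ t ih =>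
    intro h
    rw [List.prod_cons, Equiv.Perm.mul_apply,
      ih (fun τ hτ => h τ (List.mem_cons_of_mem _ hτ)), h σ List.mem_cons_self]

lemma prod_agree (η : Equiv.Perm Atom) (b : Atom) (hb : η b ≠ b) :
    ∀ l : List (Equiv.Perm Atom), l.Pairwise Equiv.Perm.Disjoint → η ∈ l →
      l.prod b = η b := by
  intro l
  induction l with
  | nil => intro _ h; simp at h
  | cons σ t ih =>
    intro hdisj hη
    rw [List.pairwise_cons] at hdisj
    rcases List.mem_cons.mp hη with rfl | hη'
    · have ht : t.prod b = b :=
        prod_fix_of_fix b t (fun τ hτ => (hdisj.1 τ hτ b).resolve_left hb)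
      rw [List.prod_cons, Equiv.Perm.mul_apply, ht]
    · have ht : t.prod b = η b := ih hdisj.2 hη'
      have hσ : σ (η b) = η b := by
        rcases hdisj.1 η hη' (η b) with h | h
        · exact h
        · exact absurd (η.injective h) hb
      rw [List.prod_cons, Equiv.Perm.mul_apply, ht, hσ]

lemma pow_agree (π η : Equiv.Perm Atom)
    (hagree : ∀ c, η c ≠ c → π c = η c) (b : Atom) (hb : η b ≠ b) :
    ∀ n : ℕ, (π ^ n) b = (η ^ n) b := by
  intro n
  induction n with
  | zero => simp
  | succ n ih =>
    have hmove : η ((η ^ n) b) ≠ (η ^ n) b := by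
      intro h
      apply hb
      have h2 : (η ^ n) (η b) = (η ^ n) b := by
        rw [← Equiv.Perm.mul_apply, ← pow_succ, pow_succ', Equiv.Perm.mul_apply]
        exact h
      exact (η ^ n).injective h2
    rw [pow_succ', pow_succ', Equiv.Perm.mul_apply, Equiv.Perm.mul_apply, ih,
      hagree _ hmove]

end Aux

/-- if `π • x = x`, `π` is a product of pairwise disjoint cycles, and
`η` is one of those cycles whose domain contains an atom outside `supp x`, then the
domain of `η` is disjoint from `supp x`. -/
theorem stmt0 {X : Type*} (act : FinPerm → X → X) (hnom : IsNominal act)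
    (x : X) (π : FinPerm) (l : List (Equiv.Perm Atom))
    (hdisj : l.Pairwise Equiv.Perm.Disjoint)
    (hcycles : ∀ η ∈ l, η.IsCycle)
    (hprod : (π : Equiv.Perm Atom) = l.prod)
    (hfix : act π x = x)
    (η : Equiv.Perm Atom) (hη : η ∈ l)
    (hex : ∃ a ∈ pdom η, a ∉ nsupp act x) :
    pdom η ∩ nsupp act x = ∅ := by
  obtain ⟨a, haη, hansupp⟩ := hex
  rw [Set.eq_empty_iff_forall_notMem]
  rintro b ⟨hbη, hbsupp⟩
  simp only [pdom, Set.mem_setOf_eq] at haη hbη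
  have hagree : ∀ c, η c ≠ c → (π : Equiv.Perm Atom) c = η c := by
    intro c hc
    rw [hprod]
    exact prod_agree η c hc l hdisj hη
  have hmem : ∀ (n : ℕ) (c : Atom),
      (((π : Equiv.Perm Atom)) ^ n) c ∈ nsupp act x ↔ c ∈ nsupp act x := by
    intro n
    induction n with
    | zero => simp
    | succ n ih =>
      intro c
      rw [pow_succ, Equiv.Perm.mul_apply, ih, mem_nsupp_iff_of_fix act hnom π x hfix]
  obtain ⟨i, hi⟩ := (hcycles η hη).exists_zpow_eq haη hbη
  rcases le_or_gt 0 i with hle | hlt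
  · set n := i.toNat with hn
    have hηn : (η ^ n) a = b := by
      rw [← hi, ← zpow_natCast, hn, Int.toNat_of_nonneg hle]
    have : ((π : Equiv.Perm Atom) ^ n) a = b := by
      rw [pow_agree _ η hagree a haη n, hηn]
    have := (hmem n a).mp (this ▸ hbsupp)
    exact hansupp this
  · set n := (-i).toNat with hn
    have hηn : (η ^ n) b = a := by
      rw [← hi, ← Equiv.Perm.mul_apply, ← zpow_natCast, hn,
        Int.toNat_of_nonneg (by omega : (0:ℤ) ≤ -i), ← zpow_add]
      simp
    have hπn : ((π : Equiv.Perm Atom) ^ n) b = a := by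
      rw [pow_agree _ η hagree b hbη n, hηn]
    have := (hmem n b).mpr hbsupp
    rw [hπn] at this
    exact hansupp this
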